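/- Let a, b be real numbers with 0 < a ≤ b < 1 and a < 1. Then the vector p* = (a, 0, b−a, 1−b) lies in 𝒫(a,b) and satisfies D_KL(p*, p_E(a,b)) = B(a,b) exactly (using the convention 0·log 0 = 0). Consequently, when additionally b ≤ 1/2, B(a,b) is the maximum of D_KL(p, p_E(a,b)) over p ∈ 𝒫(a,b), i.e., the upper bound of Theorem 1 is tight. -/

import Mathlib

open Real

private lemma phi_conv' (x y s z : ℝ) (hx : 0 ≤ x) (hy : 0 ≤ y) (hs0 : 0 ≤ s) (hs1 : s ≤ 1)
    (hz : z = (1 - s) * x + s * y) :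
    z * log z ≤ (1 - s) * (x * log x) + s * (y * log y) := by
  have := Real.convexOn_mul_log.2 (Set.mem_Ici.2 hx) (Set.mem_Ici.2 hy)
    (by linarith : (0:ℝ) ≤ 1 - s) hs0 (by ring)
  simpa [smul_eq_mul, hz] using this

/-- `g(0) ≤ g(a)` step: comparison of the endpoint entropies. -/
private lemma endpoint_le (a b : ℝ) (ha : 0 < a) (hab : a ≤ b) (hb2 : b ≤ 1/2) :
    b * log b + (1 - a - b) * log (1 - a - b)
      ≤ (b - a) * log (b - a) + (1 - b) * log (1 - b) := by
  have hD : 0 < 1 + a - 2*b := by linarith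
  set s : ℝ := a / (1 + a - 2*b) with hs
  have hs0 : 0 ≤ s := by positivity
  have hs1 : s ≤ 1 := by rw [hs, div_le_one hD]; linarith
  have h1 : b * log b ≤ (1 - s) * ((b - a) * log (b - a)) + s * ((1 - b) * log (1 - b)) :=
    phi_conv' (b - a) (1 - b) s b (by linarith) (by linarith) hs0 hs1 (by
      linear_combination -(div_mul_cancel₀ a hD.ne'))
  have h2 : (1 - a - b) * log (1 - a - b)
      ≤ s * ((b - a) * log (b - a)) + (1 - s) * ((1 - b) * log (1 - b)) := by
    have := phi_conv' (1 - b) (b - a) s (1 - a - b) (by linarith) (by linarith) hs0 hs1 (by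
      linear_combination (div_mul_cancel₀ a hD.ne'))
    linarith [this]
  linarith

/-- Main entropy inequality: the entropy-sum over the fibre is maximised at `t = a`. -/
private lemma main_ineq (a b t : ℝ) (ha : 0 < a) (hab : a ≤ b) (hb2 : b ≤ 1/2)
    (ht0 : 0 ≤ t) (hta : t ≤ a) :
    t * log t + (a - t) * log (a - t) + (b - t) * log (b - t)
        + (1 - a - b + t) * log (1 - a - b + t)
      ≤ a * log a + (b - a) * log (b - a) + (1 - b) * log (1 - b) := by
  set s : ℝ := t / a with hs
  have hs0 : 0 ≤ s := by positivity
  have hs1 : s ≤ 1 := by rw [hs, div_le_one ha]; exact hta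
  have c1 : t * log t ≤ (1 - s) * ((0:ℝ) * log 0) + s * (a * log a) :=
    phi_conv' 0 a s t le_rfl ha.le hs0 hs1 (by rw [hs]; field_simp; try ring)
  have c2 : (a - t) * log (a - t) ≤ (1 - s) * (a * log a) + s * ((0:ℝ) * log 0) :=
    phi_conv' a 0 s (a - t) ha.le le_rfl hs0 hs1 (by rw [hs]; field_simp; try ring)
  have c3 : (b - t) * log (b - t)
      ≤ (1 - s) * (b * log b) + s * ((b - a) * log (b - a)) :=
    phi_conv' b (b - a) s (b - t) (by linarith) (by linarith) hs0 hs1 (by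
      rw [hs]; field_simp; try ring)
  have c4 : (1 - a - b + t) * log (1 - a - b + t)
      ≤ (1 - s) * ((1 - a - b) * log (1 - a - b)) + s * ((1 - b) * log (1 - b)) :=
    phi_conv' (1 - a - b) (1 - b) s (1 - a - b + t) (by linarith) (by linarith) hs0 hs1 (by
      rw [hs]; field_simp; try ring)
  have hend := endpoint_le a b ha hab hb2
  have h0 : (0:ℝ) * log 0 = 0 := by simp
  rw [h0] at c1 c2
  nlinarith [hend, mul_nonneg hs0 (sub_nonneg.2 hend), c1, c2, c3, c4]

private lemma term_eq (p q : ℝ) (hp : 0 ≤ p) (hq : 0 < q) :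
    p * log (p / q) = p * log p - p * log q := by
  rcases eq_or_lt_of_le hp with h | h
  · simp [← h]
  · rw [log_div h.ne' hq.ne']; ring

/-- Tightness of the bound: for `0 < a ≤ b < 1` (and `a < 1`), the vector
`p* = (a, 0, b-a, 1-b)` lies in `𝒫(a,b)` and attains `D_KL(p*, p_E(a,b)) = B(a,b)`
exactly; consequently, when additionally `b ≤ 1/2`, `B(a,b)` is the maximum of
the KL divergence over all of `𝒫(a,b)`. -/
theorem kl_upper_bound_tight (a b : ℝ) (ha : 0 < a) (hab : a ≤ b) (hb : b < 1)
    (ha1 : a < 1) :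
    (0 ≤ a ∧ 0 ≤ (0 : ℝ) ∧ 0 ≤ b - a ∧ 0 ≤ 1 - b ∧
      a + 0 + (b - a) + (1 - b) = 1 ∧ a + 0 = a ∧ a + (b - a) = b) ∧
    (a * log (a / (a * b)) + 0 * log (0 / (a * (1 - b)))
        + (b - a) * log ((b - a) / ((1 - a) * b))
        + (1 - b) * log ((1 - b) / ((1 - a) * (1 - b)))
      = a * log (1 / b) + (b - a) * log ((b - a) / ((1 - a) * b))
        + (1 - b) * log (1 / (1 - a))) ∧
    (b ≤ 1/2 → ∀ p₁ p₂ p₃ p₄ : ℝ, 0 ≤ p₁ → 0 ≤ p₂ → 0 ≤ p₃ → 0 ≤ p₄ →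
      p₁ + p₂ + p₃ + p₄ = 1 → p₁ + p₂ = a → p₁ + p₃ = b →
      p₁ * log (p₁ / (a * b)) + p₂ * log (p₂ / (a * (1 - b)))
        + p₃ * log (p₃ / ((1 - a) * b)) + p₄ * log (p₄ / ((1 - a) * (1 - b)))
      ≤ a * log (1 / b) + (b - a) * log ((b - a) / ((1 - a) * b))
        + (1 - b) * log (1 / (1 - a))) := by
  have hb0 : 0 < b := lt_of_lt_of_le ha hab
  have hb1 : 0 < 1 - b := by linarith
  have ha1' : 0 < 1 - a := by linarith
  refine ⟨⟨ha.le, le_rfl, by linarith, by linarith, by ring, by ring, by ring⟩, ?_, ?_⟩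
  · have e1 : a / (a * b) = 1 / b := by field_simp
    have e2 : (1 - b) / ((1 - a) * (1 - b)) = 1 / (1 - a) := by
      rw [mul_comm]; field_simp
    rw [e1, e2]; simp
  · intro hb2 p₁ p₂ p₃ p₄ h1 h2 h3 h4 hsum hpa hpb
    have hp2 : p₂ = a - p₁ := by linarith
    have hp3 : p₃ = b - p₁ := by linarith
    have hp4 : p₄ = 1 - a - b + p₁ := by linarith
    subst hp2 hp3 hp4
    have key := main_ineq a b p₁ ha hab hb2 h1 (by linarith)
    -- rewrite every KL term as φ(p) - p * (sum of logs)
    have e1 : p₁ * log (p₁ / (a * b)) = p₁ * log p₁ - p₁ * (log a + log b) := by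
      rw [term_eq p₁ _ h1 (by positivity), log_mul ha.ne' hb0.ne']
    have e2 : (a - p₁) * log ((a - p₁) / (a * (1 - b)))
        = (a - p₁) * log (a - p₁) - (a - p₁) * (log a + log (1 - b)) := by
      rw [term_eq _ _ h2 (by positivity), log_mul ha.ne' hb1.ne']
    have e3 : (b - p₁) * log ((b - p₁) / ((1 - a) * b))
        = (b - p₁) * log (b - p₁) - (b - p₁) * (log (1 - a) + log b) := by
      rw [term_eq _ _ h3 (by positivity), log_mul ha1'.ne' hb0.ne']
    have e4 : (1 - a - b + p₁) * log ((1 - a - b + p₁) / ((1 - a) * (1 - b)))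
        = (1 - a - b + p₁) * log (1 - a - b + p₁)
          - (1 - a - b + p₁) * (log (1 - a) + log (1 - b)) := by
      rw [term_eq _ _ h4 (by positivity), log_mul ha1'.ne' hb1.ne']
    have r1 : a * log (1 / b) = -(a * log b) := by rw [one_div, log_inv]; ring
    have r2 : (b - a) * log ((b - a) / ((1 - a) * b))
        = (b - a) * log (b - a) - (b - a) * (log (1 - a) + log b) := by
      rw [term_eq _ _ (by linarith) (by positivity), log_mul ha1'.ne' hb0.ne']
    have r3 : (1 - b) * log (1 / (1 - a)) = -((1 - b) * log (1 - a)) := by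
      rw [one_div, log_inv]; ring
    rw [e1, e2, e3, e4, r1, r2, r3]
    nlinarith [key]
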